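/- Fix reals ν > 0 and ρ ∈ (0, 1/2). Let (k_j) and (ℓ_j) be sequences of positive integers with k_j → ∞, 1 ≤ ℓ_j ≤ k_j for all j, and ℓ_j / k_j → 0. Then, writing ξ_j := (1 − ν/k_j)^{ℓ_j}, the ratio [ (1 − ν/k_j)^{k_j − ℓ_j} · ( H₂(ξ_j ⋆ ρ) − H₂(ρ) ) ] / [ e^{−ν} · ν · (ℓ_j/k_j) · (1 − 2ρ) · log((1−ρ)/ρ) ] converges to 1 as j → ∞. -/

import Mathlib

/-- Binary entropy function with natural logarithm. -/
noncomputable def binH (q : ℝ) : ℝ := -q * Real.log q - (1 - q) * Real.log (1 - q)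

/-- The binary "star" operation `q ⋆ ρ = qρ + (1-q)(1-ρ)`. -/
def star' (q ρ : ℝ) : ℝ := q * ρ + (1 - q) * (1 - ρ)

open Filter Real

lemma tendsto_slope_log : Tendsto (fun x : ℝ => Real.log (1 - x) / x) (nhdsWithin 0 {(0:ℝ)}ᶜ) (nhds (-1)) := by
  have h1 : HasDerivAt (fun x : ℝ => (1:ℝ) - x) (-1) 0 := by
    exact (hasDerivAt_id' (0:ℝ)).const_sub 1
  have h : HasDerivAt (fun x : ℝ => Real.log (1 - x)) (-1) 0 := by
    have := (Real.hasDerivAt_log (by norm_num : (1:ℝ) - 0 ≠ 0)).comp 0 h1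
    simpa [Function.comp_def] using this
  have := hasDerivAt_iff_tendsto_slope.mp h
  refine this.congr' ?_ |>.mono_left ?_
  · filter_upwards [] with x
    simp [slope_def_field]
  · exact le_refl _

lemma tendsto_slope_exp : Tendsto (fun s : ℝ => (1 - Real.exp (-s)) / s) (nhdsWithin 0 {(0:ℝ)}ᶜ) (nhds 1) := by
  have h : HasDerivAt (fun s : ℝ => 1 - Real.exp (-s)) 1 0 := by
    have h1 : HasDerivAt (fun s : ℝ => -s) (-1) 0 := by exact (hasDerivAt_id' (0:ℝ)).neg
    have := ((Real.hasDerivAt_exp (-0)).comp 0 h1).const_sub 1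
    simpa using this
  have := hasDerivAt_iff_tendsto_slope.mp h
  refine this.congr' ?_
  filter_upwards [] with x
  simp [slope_def_field]

lemma binH_hasDerivAt {q : ℝ} (h0 : 0 < q) (h1 : q < 1) :
    HasDerivAt binH (Real.log (1 - q) - Real.log q) q := by
  have hq1 : (1:ℝ) - q ≠ 0 := by linarith
  have hA : HasDerivAt (fun x : ℝ => -(x * Real.log x)) (-(Real.log q + 1)) q :=
    (Real.hasDerivAt_mul_log h0.ne').neg
  have hsub : HasDerivAt (fun x : ℝ => (1:ℝ) - x) (-1) q := by
    exact (hasDerivAt_id' q).const_sub 1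
  have hB : HasDerivAt (fun x : ℝ => -((1 - x) * Real.log (1 - x)))
      (Real.log (1 - q) + 1) q := by
    have := ((Real.hasDerivAt_mul_log hq1).comp q hsub).neg
    exact this.congr_deriv (by ring)
  have := hA.add hB
  have heq : ((fun x : ℝ => -(x * Real.log x)) + fun x : ℝ => -((1 - x) * Real.log (1 - x))) = binH := by
    funext x; simp only [Pi.add_apply, binH]; ring
  rw [heq] at this
  exact this.congr_deriv (by ring)
theorem gtn_mutual_information_small_ratio (ν ρ : ℝ) (hν : 0 < ν) (hρ0 : 0 < ρ)
    (hρ1 : ρ < 1 / 2)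
    (k l : ℕ → ℕ) (hk1 : ∀ j, 1 ≤ k j) (hl1 : ∀ j, 1 ≤ l j) (hlk : ∀ j, l j ≤ k j)
    (hktop : Filter.Tendsto k Filter.atTop Filter.atTop)
    (hratio : Filter.Tendsto (fun j => (l j : ℝ) / (k j : ℝ)) Filter.atTop (nhds 0)) :
    Filter.Tendsto
      (fun j => ((1 - ν / (k j : ℝ)) ^ (k j - l j) *
          (binH (star' ((1 - ν / (k j : ℝ)) ^ (l j)) ρ) - binH ρ))
        / (Real.exp (-ν) * ν * ((l j : ℝ) / (k j : ℝ)) * (1 - 2 * ρ) *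
            Real.log ((1 - ρ) / ρ)))
      Filter.atTop (nhds 1) := by
  have hρ1' : ρ < 1 := by linarith
  have h2ρ : (0:ℝ) < 1 - 2 * ρ := by linarith
  set L : ℝ := Real.log ((1 - ρ) / ρ) with hLdef
  have hL : 0 < L := Real.log_pos ((one_lt_div hρ0).2 (by linarith))
  have hLeq : L = Real.log (1 - ρ) - Real.log ρ := Real.log_div (by linarith) hρ0.ne'
  have hkpos : ∀ j, (0:ℝ) < (k j : ℝ) := fun j => by exact_mod_cast hk1 j
  have hlpos : ∀ j, (0:ℝ) < (l j : ℝ) := fun j => by exact_mod_cast hl1 j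
  have hkR : Tendsto (fun j => (k j : ℝ)) atTop atTop :=
    tendsto_natCast_atTop_atTop.comp hktop
  have ha0 : Tendsto (fun j => ν / (k j : ℝ)) atTop (nhds 0) :=
    tendsto_const_nhds.div_atTop hkR
  have hane : ∀ j, ν / (k j : ℝ) ≠ 0 := fun j => div_ne_zero hν.ne' (hkpos j).ne'
  have ha0' : Tendsto (fun j => ν / (k j : ℝ)) atTop (nhdsWithin 0 {(0:ℝ)}ᶜ) := by
    rw [tendsto_nhdsWithin_iff]
    exact ⟨ha0, Filter.Eventually.of_forall fun j => hane j⟩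
  set m : ℕ → ℝ := fun j => Real.log (1 - ν / (k j : ℝ)) with hmdef
  have hma : Tendsto (fun j => m j / (ν / (k j : ℝ))) atTop (nhds (-1)) :=
    tendsto_slope_log.comp ha0'
  have hkm : Tendsto (fun j => (k j : ℝ) * m j) atTop (nhds (-ν)) := by
    have h := hma.const_mul ν
    rw [mul_neg_one] at h
    refine h.congr fun j => ?_
    have hkne := (hkpos j).ne'
    field_simp
  have hlm : Tendsto (fun j => (l j : ℝ) * m j) atTop (nhds 0) := by
    have h := hratio.mul hkm
    rw [zero_mul] at h
    refine h.congr fun j => ?_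
    have hkne := (hkpos j).ne'
    field_simp
  have hev : ∀ᶠ j in atTop, ν < (k j : ℝ) := hkR.eventually_gt_atTop ν
  have hfacts : ∀ j, ν < (k j : ℝ) →
      0 < 1 - ν / (k j : ℝ) ∧ m j < 0 ∧
      (∀ n : ℕ, (1 - ν / (k j : ℝ)) ^ n = Real.exp ((n : ℝ) * m j)) := by
    intro j hj
    have hap : 0 < ν / (k j : ℝ) := div_pos hν (hkpos j)
    have ha1 : ν / (k j : ℝ) < 1 := (div_lt_one (hkpos j)).2 hj
    have h1a : 0 < 1 - ν / (k j : ℝ) := by linarith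
    refine ⟨h1a, Real.log_neg h1a (by linarith), fun n => ?_⟩
    rw [Real.exp_nat_mul, hmdef, Real.exp_log h1a]
  set ξ : ℕ → ℝ := fun j => (1 - ν / (k j : ℝ)) ^ (l j) with hξdef
  have hξ : Tendsto ξ atTop (nhds 1) := by
    have h1 : Tendsto (fun j => Real.exp ((l j : ℝ) * m j)) atTop (nhds 1) := by
      have := (Real.continuous_exp.tendsto 0).comp hlm
      simpa [Function.comp_def] using this
    refine h1.congr' ?_
    filter_upwards [hev] with j hj
    exact ((hfacts j hj).2.2 (l j)).symm
  set t : ℕ → ℝ := fun j => (1 - ξ j) * (1 - 2 * ρ) with htdef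
  have ht0 : Tendsto t atTop (nhds 0) := by
    have h1 : Tendsto (fun j => 1 - ξ j) atTop (nhds (1 - 1)) :=
      (tendsto_const_nhds : Tendsto (fun _ : ℕ => (1:ℝ)) atTop (nhds 1)).sub hξ
    have h2 := h1.mul_const (1 - 2 * ρ)
    simpa using h2
  have hξlt : ∀ j, ν < (k j : ℝ) → ξ j < 1 := by
    intro j hj
    have h1a := (hfacts j hj).1
    have hap : 0 < ν / (k j : ℝ) := div_pos hν (hkpos j)
    exact pow_lt_one₀ h1a.le (by linarith) (Nat.one_le_iff_ne_zero.mp (hl1 j))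
  have htne : ∀ᶠ j in atTop, t j ≠ 0 := by
    filter_upwards [hev] with j hj
    have h1 := hξlt j hj
    have h2 : 0 < t j := mul_pos (by linarith) h2ρ
    exact h2.ne'
  have ht0' : Tendsto t atTop (nhdsWithin 0 {(0:ℝ)}ᶜ) := by
    rw [tendsto_nhdsWithin_iff]
    exact ⟨ht0, htne⟩
  have hslope3 : Tendsto (fun s : ℝ => (binH (ρ + s) - binH ρ) / s)
      (nhdsWithin 0 {(0:ℝ)}ᶜ) (nhds L) := by
    have hd : HasDerivAt (fun s : ℝ => binH (ρ + s)) L 0 := by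
      have h1 : HasDerivAt (fun s : ℝ => ρ + s) 1 0 := by
        exact (hasDerivAt_id' (0:ℝ)).const_add ρ
      have h2 : HasDerivAt binH (Real.log (1 - ρ) - Real.log ρ) ((fun s : ℝ => ρ + s) 0) := by
        simpa using binH_hasDerivAt hρ0 hρ1'
      have h3 := HasDerivAt.comp (0:ℝ) h2 h1
      rw [hLeq]
      simpa [Function.comp_def] using h3
    have := hasDerivAt_iff_tendsto_slope.mp hd
    refine this.congr' ?_
    filter_upwards [] with x
    simp [slope_def_field]
  -- Factor A
  have hA : Tendsto (fun j => (1 - ν / (k j : ℝ)) ^ (k j - l j) / Real.exp (-ν))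
      atTop (nhds 1) := by
    have hE : Tendsto (fun j => Real.exp ((k j : ℝ) * m j - (l j : ℝ) * m j) / Real.exp (-ν))
        atTop (nhds 1) := by
      have h1 : Tendsto (fun j => (k j : ℝ) * m j - (l j : ℝ) * m j) atTop (nhds (-ν)) := by
        simpa using hkm.sub hlm
      have := ((Real.continuous_exp.tendsto (-ν)).comp h1).div_const (Real.exp (-ν))
      simpa [div_self (Real.exp_ne_zero (-ν))] using this
    refine hE.congr' ?_
    filter_upwards [hev] with j hj
    have hcast : ((k j - l j : ℕ) : ℝ) = (k j : ℝ) - (l j : ℝ) := by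
      exact_mod_cast Nat.cast_sub (hlk j)
    rw [(hfacts j hj).2.2 (k j - l j), hcast, sub_mul]
  -- Factor B
  have hB : Tendsto (fun j => ((binH (ρ + t j) - binH ρ) / t j) / L) atTop (nhds 1) := by
    have := (hslope3.comp ht0').div_const L
    simpa [div_self hL.ne'] using this
  -- Factor C
  have huneg : ∀ᶠ j in atTop, (l j : ℝ) * m j < 0 := by
    filter_upwards [hev] with j hj
    exact mul_neg_of_pos_of_neg (hlpos j) (hfacts j hj).2.1
  have hnu0' : Tendsto (fun j => -((l j : ℝ) * m j)) atTop (nhdsWithin 0 {(0:ℝ)}ᶜ) := by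
    rw [tendsto_nhdsWithin_iff]
    constructor
    · simpa using hlm.neg
    · filter_upwards [huneg] with j hj
      simp only [Set.mem_compl_iff, Set.mem_singleton_iff]
      intro h
      rw [neg_eq_zero] at h
      exact absurd h hj.ne
  have hF : Tendsto (fun j => (1 - Real.exp ((l j : ℝ) * m j)) / (-((l j : ℝ) * m j)))
      atTop (nhds 1) := by
    have := tendsto_slope_exp.comp hnu0'
    refine this.congr fun j => ?_
    simp [Function.comp]
  have hrne : ∀ j, ν * ((l j : ℝ) / (k j : ℝ)) ≠ 0 := fun j =>
    mul_ne_zero hν.ne' (div_ne_zero (hlpos j).ne' (hkpos j).ne')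
  have hG : Tendsto (fun j => (-((l j : ℝ) * m j)) / (ν * ((l j : ℝ) / (k j : ℝ))))
      atTop (nhds 1) := by
    have h := hma.neg
    rw [neg_neg] at h
    refine h.congr fun j => ?_
    have hkne := (hkpos j).ne'
    have hlne := (hlpos j).ne'
    field_simp
  have alg2 : ∀ x u r : ℝ, u ≠ 0 → r ≠ 0 →
      (1 - x) / (-u) * (-u / r) = (1 - x) / r := by
    intro x u r hu hr
    field_simp
  have hC : Tendsto (fun j => (1 - ξ j) / (ν * ((l j : ℝ) / (k j : ℝ)))) atTop (nhds 1) := by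
    have h := hF.mul hG
    rw [mul_one] at h
    refine h.congr' ?_
    filter_upwards [hev, huneg] with j hj hu
    have hξe : ξ j = Real.exp ((l j : ℝ) * m j) := (hfacts j hj).2.2 (l j)
    rw [alg2 (Real.exp ((l j : ℝ) * m j)) ((l j : ℝ) * m j)
        (ν * ((l j : ℝ) / (k j : ℝ))) hu.ne (hrne j), ← hξe]
  -- assemble
  have alg : ∀ P D X E q c LL : ℝ, E ≠ 0 → LL ≠ 0 → ν ≠ 0 → q ≠ 0 → c ≠ 0 → 1 - X ≠ 0 →
      P / E * (D / ((1 - X) * c) / LL) * ((1 - X) / (ν * q))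
        = P * D / (E * ν * q * c * LL) := by
    intro P D X E q c LL hE hLL hν' hq hc hX
    field_simp
  have hfinal := (hA.mul hB).mul hC
  rw [one_mul, mul_one] at hfinal
  refine hfinal.congr' ?_
  filter_upwards [hev] with j hj
  have h1ξ : 1 - ξ j ≠ 0 := by
    have h1 := hξlt j hj
    intro h; rw [sub_eq_zero] at h; exact absurd h.symm h1.ne
  have hstar : star' ((1 - ν / (k j : ℝ)) ^ (l j)) ρ = ρ + t j := by
    simp only [star', htdef, hξdef]; ring
  rw [hstar, show t j = (1 - ξ j) * (1 - 2 * ρ) from rfl]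
  exact alg ((1 - ν / (k j : ℝ)) ^ (k j - l j))
    (binH (ρ + (1 - ξ j) * (1 - 2 * ρ)) - binH ρ) (ξ j) (Real.exp (-ν))
    ((l j : ℝ) / (k j : ℝ)) (1 - 2 * ρ) L (Real.exp_ne_zero _) hL.ne' hν.ne'
    (div_ne_zero (hlpos j).ne' (hkpos j).ne') h2ρ.ne' h1ξ
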